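/- The rule (N) of the F₂ fragment is sound: if a frame satisfies A ⇏ X, (A ∧ Z) ⇒ X, and A ⇒ Yᵢ for each i = 1,…,n, then it satisfies (Y₁ ∧ … ∧ Yₙ) ⇏ Z, where A is a conjunction of propositional variables and X, Z, Y₁,…,Yₙ are propositional variables. -/

import Mathlib

/-- Propositional formulas over variables `V`. -/
inductive PropForm (V : Type) : Type
  | var : V → PropForm V
  | not : PropForm V → PropForm V
  | and : PropForm V → PropForm V → PropForm V
  | or  : PropForm V → PropForm V → PropForm V
  | imp : PropForm V → PropForm V → PropForm V

namespace PropForm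
def eval {V : Type} (v : V → Bool) : PropForm V → Bool
  | var x => v x
  | not A => !(A.eval v)
  | and A B => A.eval v && B.eval v
  | or A B => A.eval v || B.eval v
  | imp A B => !(A.eval v) || B.eval v
end PropForm

/-- s-formulas: positive `A ⇒ B` or negative `A ⇏ B`. -/
inductive SForm (V : Type) : Type
  | pos : PropForm V → PropForm V → SForm V
  | neg : PropForm V → PropForm V → SForm V

def SForm.IsPos {V : Type} : SForm V → Prop
  | .pos _ _ => True
  | .neg _ _ => False

/-- A frame (set of valuations, nonemptiness required separately) satisfies an s-formula. -/
def FrameSat {V : Type} (W : Set (V → Bool)) : SForm V → Prop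
  | .pos A B => ∀ v ∈ W, A.eval v = true → B.eval v = true
  | .neg A B => ∃ v ∈ W, A.eval v = true ∧ B.eval v = false

/-- Satisfiability of a set of s-formulas by some (nonempty) frame. -/
def SSat {V : Type} (Γ : Set (SForm V)) : Prop :=
  ∃ W : Set (V → Bool), W.Nonempty ∧ ∀ φ ∈ Γ, FrameSat W φ

/-- s-logical consequence `Γ ⊨ₛ α`. -/
def SCons {V : Type} (Γ : Set (SForm V)) (α : SForm V) : Prop :=
  ∀ W : Set (V → Bool), W.Nonempty → (∀ φ ∈ Γ, FrameSat W φ) → FrameSat W α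

/-- `Γ⁺`: the positive s-formulas of `Γ`. -/
def posPart {V : Type} (Γ : Set (SForm V)) : Set (SForm V) :=
  {φ | φ ∈ Γ ∧ ∃ A B, φ = SForm.pos A B}

/-- `Γ⁺_prop`: propositional implications corresponding to the positive s-formulas of `Γ`. -/
def propPart {V : Type} (Γ : Set (SForm V)) : Set (PropForm V) :=
  {C | ∃ A B, SForm.pos A B ∈ Γ ∧ C = PropForm.imp A B}

/-- Classical propositional satisfiability of a set of formulas. -/
def PropSat {V : Type} (S : Set (PropForm V)) : Prop :=
  ∃ v : V → Bool, ∀ C ∈ S, C.eval v = true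

/-- Classical propositional consequence. -/
def PropCons {V : Type} (S : Set (PropForm V)) (C : PropForm V) : Prop :=
  ∀ v : V → Bool, (∀ D ∈ S, D.eval v = true) → C.eval v = true

/-- Conjunction of a nonempty list of variables. -/
def varConj {V : Type} (x : V) (l : List V) : PropForm V :=
  l.foldl (fun acc y => acc.and (.var y)) (.var x)

/-- Disjunction of a nonempty list of variables. -/
def varDisj {V : Type} (x : V) (l : List V) : PropForm V :=
  l.foldl (fun acc y => acc.or (.var y)) (.var x)

lemma foldl_and_eval {V : Type} (v : V → Bool) (l : List V) (P : PropForm V) :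
    (l.foldl (fun acc y => acc.and (.var y)) P).eval v = (P.eval v && l.all v) := by
  induction l generalizing P with
  | nil => simp [List.all]
  | cons b bs ih =>
      simp [List.foldl, ih, PropForm.eval, Bool.and_assoc]

lemma varConj_eval {V : Type} (v : V → Bool) (x : V) (l : List V) :
    (varConj x l).eval v = (v x && l.all v) := by
  simpa [varConj, PropForm.eval] using foldl_and_eval v l (.var x)

theorem stmt12 {V : Type} (W : Set (V → Bool)) (hW : W.Nonempty)
    (a : V) (as : List V) (X Z : V) (y : V) (ys : List V)
    (h1 : FrameSat W (SForm.neg (varConj a as) (.var X)))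
    (h2 : FrameSat W (SForm.pos ((varConj a as).and (.var Z)) (.var X)))
    (h3 : ∀ Yi ∈ y :: ys, FrameSat W (SForm.pos (varConj a as) (.var Yi))) :
    FrameSat W (SForm.neg (varConj y ys) (.var Z)) := by
  obtain ⟨v, hvW, hA, hX⟩ := h1
  refine ⟨v, hvW, ?_, ?_⟩
  · rw [varConj_eval]
    have hy := h3 y (by simp) v hvW hA
    have hys : ∀ w ∈ ys, v w = true := fun w hw => by
      simpa [PropForm.eval] using h3 w (by simp [hw]) v hvW hA
    simp [PropForm.eval] at hy
    simpa [hy, List.all_eq_true] using hys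
  · by_contra hZ
    have hZ' : v Z = true := by simpa [PropForm.eval] using hZ
    have := h2 v hvW (by simp [PropForm.eval, hA, hZ'])
    simp only [PropForm.eval] at this hX
    exact absurd this (by simp [hX])
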